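/- For any m ≥ 1 and variables x_1,…,x_m in a commutative ring, the generating-function identity ∏_{i=1}^m (x_i t)/(e^{x_i t} - 1) = exp(Σ_{k≥1} (-1)^{k-1} B_k p_k t^k / (k·k!)) holds as an identity of formal power series in t, where p_k = Σ_{i=1}^m x_i^k and B_k is the k-th Bernoulli number. -/

import Mathlib

open scoped BigOperators

/-- Formal exponential of a power series with zero constant term:
its `n`-th coefficient is `∑_{j≤n} coeff n (f^j) / j!`. -/
noncomputable def expPS {R : Type*} [CommRing R] [Algebra ℚ R]
    (f : PowerSeries R) : PowerSeries R :=
  PowerSeries.mk fun n =>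
    ∑ j ∈ Finset.range (n + 1),
      ((Nat.factorial j : ℚ)⁻¹) • (PowerSeries.coeff (R := R) n (f ^ j))

/-- The power sum `p_k = ∑_{i=1}^m x_i^k`. -/
noncomputable def psum (m k : ℕ) : MvPolynomial (Fin m) ℚ :=
  ∑ i : Fin m, MvPolynomial.X i ^ k

open PowerSeries

section Aux

variable {R : Type*} [CommRing R]

lemma aux_coeff_pow_eq_zero {f : R⟦X⟧} (hf : constantCoeff f = 0)
    {j n : ℕ} (h : n < j) : coeff n (f ^ j) = 0 := by
  have hd : (X : R⟦X⟧) ^ j ∣ f ^ j := pow_dvd_pow_of_dvd (X_dvd_iff.2 hf) j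
  exact X_pow_dvd_iff.1 hd n h

lemma aux_derivative_map {S : Type*} [CommRing S] (φ : R →+* S) (f : R⟦X⟧) :
    d⁄dX S (PowerSeries.map φ f) = PowerSeries.map φ (d⁄dX R f) := by
  ext n
  simp [coeff_derivative, PowerSeries.coeff_map]

lemma aux_derivative_rescale (y : R) (f : R⟦X⟧) :
    d⁄dX R (rescale y f) = C y * rescale y (d⁄dX R f) := by
  ext n
  rw [coeff_derivative, coeff_rescale, coeff_C_mul, coeff_rescale, coeff_derivative]
  ring

lemma aux_derivative_prod {ι : Type*} (s : Finset ι) (f u : ι → R⟦X⟧)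
    (h : ∀ i ∈ s, d⁄dX R (f i) = u i * f i) :
    d⁄dX R (∏ i ∈ s, f i) = (∑ i ∈ s, u i) * ∏ i ∈ s, f i := by
  classical
  induction s using Finset.induction_on with
  | empty => simp
  | @insert a s ha ih =>
    rw [Finset.prod_insert ha, Finset.sum_insert ha, Derivation.leibniz, smul_eq_mul,
      smul_eq_mul, ih (fun i hi => h i (Finset.mem_insert_of_mem hi)),
      h a (Finset.mem_insert_self a s)]
    ring

variable [Algebra ℚ R]

lemma aux_eq_of_ode (u f g : R⟦X⟧)
    (hf : d⁄dX R f = u * f) (hg : d⁄dX R g = u * g)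
    (h0 : constantCoeff f = constantCoeff g) : f = g := by
  have hD : d⁄dX R (f - g) = u * (f - g) := by rw [map_sub, hf, hg, mul_sub]
  have h0' : constantCoeff (f - g) = 0 := by rw [map_sub, h0, sub_self]
  have key : ∀ n, coeff n (f - g) = 0 := by
    intro n
    induction n using Nat.strong_induction_on with
    | _ n ih =>
      match n with
      | 0 => simpa [coeff_zero_eq_constantCoeff] using h0'
      | Nat.succ n =>
        have e : coeff n (d⁄dX R (f - g)) = coeff n (u * (f - g)) := by rw [hD]
        rw [coeff_derivative, PowerSeries.coeff_mul] at e
        have hz : ∑ p ∈ Finset.HasAntidiagonal.antidiagonal n, coeff p.1 u * coeff p.2 (f - g) = 0 := by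
          apply Finset.sum_eq_zero
          intro p hp
          rw [ih p.2 (Nat.lt_succ_of_le (Finset.HasAntidiagonal.antidiagonal.snd_le hp)), mul_zero]
        rw [hz] at e
        have h3 : (((n + 1 : ℕ) : ℚ)) • coeff (n + 1) (f - g) = 0 := by
          rw [Algebra.smul_def, map_natCast, mul_comm]
          simpa using e
        have hnz : ((n + 1 : ℕ) : ℚ) ≠ 0 := by positivity
        calc coeff (n + 1) (f - g)
            = (((n + 1 : ℕ) : ℚ))⁻¹ • ((((n + 1 : ℕ) : ℚ)) • coeff (n + 1) (f - g)) := by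
              rw [smul_smul, inv_mul_cancel₀ hnz, one_smul]
          _ = 0 := by rw [h3, smul_zero]
  have : f - g = 0 := by ext n; simpa using key n
  exact sub_eq_zero.1 this


lemma aux_derivative_expPS (f : R⟦X⟧) (hf : constantCoeff f = 0) :
    d⁄dX R (expPS f) = d⁄dX R f * expPS f := by
  ext n
  rw [coeff_derivative, PowerSeries.coeff_mul]
  have hco : ∀ b ≤ n, coeff b (expPS f)
      = ∑ j ∈ Finset.range (n + 1), (j.factorial : ℚ)⁻¹ • coeff b (f ^ j) := by
    intro b hb
    rw [expPS, coeff_mk]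
    apply Finset.sum_subset
    · exact Finset.range_subset_range.2 (by omega)
    · intro j hj hj'
      rw [Finset.mem_range] at hj hj'
      rw [aux_coeff_pow_eq_zero hf (by omega), smul_zero]
  have hR : ∑ p ∈ Finset.HasAntidiagonal.antidiagonal n, coeff p.1 (d⁄dX R f) * coeff p.2 (expPS f)
      = ∑ j ∈ Finset.range (n + 1), (j.factorial : ℚ)⁻¹ • coeff n (d⁄dX R f * f ^ j) := by
    rw [Finset.sum_congr rfl
      (fun p hp => by rw [hco p.2 (Finset.HasAntidiagonal.antidiagonal.snd_le hp)])]
    simp_rw [Finset.mul_sum, mul_smul_comm]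
    rw [Finset.sum_comm]
    simp_rw [← Finset.smul_sum, ← PowerSeries.coeff_mul]
  have hterm : ∀ j : ℕ, coeff n (d⁄dX R f * f ^ j)
      = ((j + 1 : ℕ) : ℚ)⁻¹ • (coeff (n + 1) (f ^ (j + 1)) * (n + 1)) := by
    intro j
    have h1 : coeff (n + 1) (f ^ (j + 1)) * (n + 1)
        = (j + 1 : ℕ) • coeff n (f ^ j * d⁄dX R f) := by
      rw [← coeff_derivative, Derivation.leibniz_pow, Nat.add_sub_cancel, smul_eq_mul, map_nsmul]
    rw [h1, ← Nat.cast_smul_eq_nsmul ℚ, smul_smul,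
      inv_mul_cancel₀ (by positivity : ((j + 1 : ℕ) : ℚ) ≠ 0), one_smul, mul_comm]
  rw [hR, Finset.sum_congr rfl fun j _ => by rw [hterm j]]
  rw [expPS, coeff_mk, Finset.sum_mul, Finset.sum_range_succ']
  have h0 : (Nat.factorial 0 : ℚ)⁻¹ • coeff (n + 1) (f ^ 0) * ((n : R) + 1) = 0 := by
    rw [pow_zero, PowerSeries.coeff_one, if_neg (Nat.succ_ne_zero n)]
    simp
  rw [h0, add_zero]
  apply Finset.sum_congr rfl
  intro j _
  rw [smul_smul, smul_mul_assoc]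
  congr 1
  rw [Nat.factorial_succ]
  push_cast
  rw [mul_inv]
  ring

end Aux

/-- The single-variable exponent series `∑_{k≥1} (-1)^(k-1) B_k X^k / (k·k!)` over `ℚ`. -/
noncomputable def cq : PowerSeries ℚ :=
  PowerSeries.mk fun k =>
    if k = 0 then 0 else (-1 : ℚ) ^ (k - 1) * bernoulli k / (k * Nat.factorial k)

lemma bernoulli_odd_zero {n : ℕ} (h : Odd n) (hn : 1 < n) : bernoulli n = 0 := by
  rw [bernoulli_eq_bernoulli'_of_ne_one (by omega)]
  exact bernoulli'_eq_zero_of_odd h hn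

lemma key1 : (X : ℚ⟦X⟧) * d⁄dX ℚ cq = 1 - X - bernoulliPowerSeries ℚ := by
  ext n
  cases n with
  | zero =>
    simp [cq, bernoulliPowerSeries, coeff_zero_eq_constantCoeff, map_mul]
  | succ k =>
    rw [coeff_succ_X_mul, coeff_derivative]
    simp only [cq, bernoulliPowerSeries, coeff_mk, map_sub, PowerSeries.coeff_one,
      PowerSeries.coeff_X, Algebra.algebraMap_self_apply, if_neg (Nat.succ_ne_zero k)]
    match k with
    | 0 => norm_num [bernoulli_one]
    | (j + 1) =>
      rw [if_neg (by omega : j + 1 + 1 ≠ 1), Nat.add_sub_cancel]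
      rcases Nat.even_or_odd (j + 1) with he | ho
      · rw [bernoulli_odd_zero he.add_one (by omega)]
        norm_num
      · rw [ho.neg_one_pow]
        have h1 : ((j + 1 + 1 : ℕ) : ℚ) ≠ 0 := by positivity
        have h2 : (((j + 1 + 1 : ℕ).factorial : ℚ)) ≠ 0 :=
          Nat.cast_ne_zero.2 (Nat.factorial_ne_zero _)
        field_simp
        push_cast
        ring

lemma key2 : d⁄dX ℚ (bernoulliPowerSeries ℚ)
    = d⁄dX ℚ cq * bernoulliPowerSeries ℚ := by
  have hB := bernoulliPowerSeries_mul_exp_sub_one ℚ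
  have hexp : d⁄dX ℚ (exp ℚ) = exp ℚ := by
    ext n
    rw [coeff_derivative, PowerSeries.coeff_exp, PowerSeries.coeff_exp]
    simp only [Algebra.algebraMap_self_apply]
    rw [Nat.factorial_succ]
    push_cast
    rw [one_div, one_div, mul_inv]
    field_simp
  have hne : (exp ℚ - 1 : ℚ⟦X⟧) ≠ 0 := by
    intro h
    have := congrArg (coeff 1) h
    simp [PowerSeries.coeff_exp, PowerSeries.coeff_one] at this
  apply mul_right_cancel₀ hne
  have hD := congrArg (d⁄dX ℚ) hB
  rw [Derivation.leibniz, smul_eq_mul, smul_eq_mul, derivative_X, map_sub, hexp,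
    Derivation.map_one_eq_zero, sub_zero] at hD
  linear_combination hD + (-(d⁄dX ℚ cq) - 1) * hB - key1

/-- `∏_{i=1}^m (x_i t)/(e^{x_i t}-1) = exp(∑_{k≥1} (-1)^{k-1} B_k p_k t^k/(k·k!))`. -/
theorem prod_bernoulli_eq_exp (m : ℕ) (hm : 1 ≤ m) :
    (∏ i : Fin m, PowerSeries.mk fun n =>
        ((bernoulli n / (Nat.factorial n : ℚ)) • (MvPolynomial.X i ^ n) :
          MvPolynomial (Fin m) ℚ)) =
    expPS (PowerSeries.mk fun k =>
        if k = 0 then 0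
        else ((-1 : ℚ) ^ (k - 1) * bernoulli k / (k * Nat.factorial k)) • psum m k) := by
  classical
  set R := MvPolynomial (Fin m) ℚ with hRdef
  set φ : ℚ →+* R := algebraMap ℚ R with hφdef
  set Bi : Fin m → PowerSeries R :=
    fun i => rescale (MvPolynomial.X i) (PowerSeries.map φ (bernoulliPowerSeries ℚ))
    with hBidef
  set ci : Fin m → PowerSeries R :=
    fun i => rescale (MvPolynomial.X i) (PowerSeries.map φ cq) with hcidef
  set c : PowerSeries R := PowerSeries.mk (fun k =>
      if k = 0 then 0
      else ((-1 : ℚ) ^ (k - 1) * bernoulli k / (k * Nat.factorial k)) • psum m k) with hc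
  have hBi : ∀ i : Fin m, (PowerSeries.mk fun n =>
      ((bernoulli n / (Nat.factorial n : ℚ)) • (MvPolynomial.X i ^ n) : R)) = Bi i := by
    intro i
    ext n
    rw [coeff_mk, hBidef]
    simp +zetaDelta only [coeff_rescale, PowerSeries.coeff_map, bernoulliPowerSeries, coeff_mk,
      Algebra.algebraMap_self_apply]
    rw [Algebra.smul_def, mul_comm]
  have hcsum : c = ∑ i : Fin m, ci i := by
    apply PowerSeries.ext
    intro k
    rw [map_sum, hc, coeff_mk]
    simp +zetaDelta only [hcidef, coeff_rescale, PowerSeries.coeff_map, cq, coeff_mk, apply_ite φ, map_zero]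
    by_cases hk : k = 0
    · simp [hk]
    · rw [if_neg hk]
      simp only [if_neg hk]
      rw [psum, Finset.smul_sum]
      apply Finset.sum_congr rfl
      intro i _
      rw [Algebra.smul_def, mul_comm]
  have hc0 : constantCoeff c = 0 := by
    rw [← coeff_zero_eq_constantCoeff_apply, hc, coeff_mk, if_pos rfl]
  have hDBi : ∀ i : Fin m, d⁄dX R (Bi i) = d⁄dX R (ci i) * Bi i := by
    intro i
    have h2 := congrArg (fun g => rescale (MvPolynomial.X i) (PowerSeries.map φ g)) key2
    simp only [map_mul] at h2
    rw [hBidef, hcidef]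
    simp only
    rw [aux_derivative_rescale, aux_derivative_map, h2, aux_derivative_rescale,
      aux_derivative_map]
    ring
  have hDF : d⁄dX R (∏ i : Fin m, Bi i) = d⁄dX R c * ∏ i : Fin m, Bi i := by
    rw [aux_derivative_prod Finset.univ Bi (fun i => d⁄dX R (ci i)) (fun i _ => hDBi i)]
    rw [hcsum, map_sum]
  have hDG : d⁄dX R (expPS c) = d⁄dX R c * expPS c := aux_derivative_expPS c hc0
  have hcF : constantCoeff (∏ i : Fin m, Bi i) = 1 := by
    rw [map_prod]
    apply Finset.prod_eq_one
    intro i _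
    rw [← coeff_zero_eq_constantCoeff_apply, hBidef]
    simp +zetaDelta [coeff_rescale, PowerSeries.coeff_map, bernoulliPowerSeries, bernoulli_zero]
  have hcG : constantCoeff (expPS c) = 1 := by
    rw [← coeff_zero_eq_constantCoeff_apply, expPS, coeff_mk]
    simp
  calc (∏ i : Fin m, PowerSeries.mk fun n =>
          ((bernoulli n / (Nat.factorial n : ℚ)) • (MvPolynomial.X i ^ n) : R))
      = ∏ i : Fin m, Bi i := Finset.prod_congr rfl fun i _ => hBi i
    _ = expPS c := aux_eq_of_ode (d⁄dX R c) _ _ hDF hDG (hcF.trans hcG.symm)
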